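/- arXiv:2101.02838 — 2 statements merged into one kernel-verified Lean document; each statement's English description precedes it below -/
import Mathlib

section
/- A finite connected simple graph G with at least two vertices is completeness-resolvable if and only if G is isomorphic to a path, or G has a universal vertex (a vertex adjacent to every other vertex), or G is isomorphic to a graph in B_k for some integer k ≥ 2, or G is isomorphic to a graph in C_k for some integer k ≥ 2. -/
open SimpleGraph

/-- `w` enumerates a `(k, m)`-completeness-resolving set of `G`:
`w` is injective, its range `W` is a proper subset of the vertex set, and the map
`u ↦ (dist (w 1) u, …, dist (w k) u)` is a bijection from `V ∖ W` onto `[m]^k`. -/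
def IsCRS {V : Type*} (G : SimpleGraph V) {k : ℕ} (w : Fin k → V) (m : ℕ) : Prop :=
  Function.Injective w ∧ Set.range w ≠ Set.univ ∧
    Function.Injective
      (fun u : {u : V // u ∉ Set.range w} => fun i : Fin k => G.dist (w i) u.1) ∧
    Set.range (fun u : {u : V // u ∉ Set.range w} => fun i : Fin k => G.dist (w i) u.1) =
      {x : Fin k → ℕ | ∀ i, 1 ≤ x i ∧ x i ≤ m}

/-- `G` is a `(k, m)`-completeness-resolvable graph. -/
def IsCRG {V : Type*} (G : SimpleGraph V) (k m : ℕ) : Prop :=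
  ∃ w : Fin k → V, IsCRS G w m

/-- `G` is completeness-resolvable. -/
def CompletenessResolvable {V : Type*} (G : SimpleGraph V) : Prop :=
  ∃ (k m : ℕ) (w : Fin k → V), IsCRS G w m

/-! ### The family `B_k`.
Tuples in `[2]^k` are modelled as functions `Fin k → Fin 2`, the `Fin 2`-value `j`
corresponding to the entry `j + 1 ∈ {1, 2}`. -/

/-- The graph `H1 ∘ H2` on `[k] ⊔ [2]^k`. -/
def comp2 {k : ℕ} (H1 : SimpleGraph (Fin k)) (H2 : SimpleGraph (Fin k → Fin 2)) :
    SimpleGraph (Fin k ⊕ (Fin k → Fin 2)) where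
  Adj a b :=
    match a, b with
    | Sum.inl i, Sum.inl j => H1.Adj i j
    | Sum.inr x, Sum.inr y => H2.Adj x y
    | Sum.inl i, Sum.inr x => x i = 0
    | Sum.inr x, Sum.inl i => x i = 0
  symm := ⟨by
    rintro (i | x) (j | y) h
    · exact H1.adj_symm h
    · exact h
    · exact h
    · exact H2.adj_symm h⟩
  loopless := ⟨by
    rintro (i | x) h
    · exact H1.irrefl h
    · exact H2.irrefl h⟩

/-- The defining condition of `B_k`: for each `i`, the edges of `H2` lying in the complete
bipartite graph `B_i^k` (i.e. joining a tuple with `i`-th entry `1` to one with `i`-th entry `2`)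
cover every tuple all of whose entries on the closed neighbourhood of `i` in `H1` equal `2`. -/
def BCond {k : ℕ} (H1 : SimpleGraph (Fin k)) (H2 : SimpleGraph (Fin k → Fin 2)) : Prop :=
  ∀ (i : Fin k) (x : Fin k → Fin 2),
    (∀ j : Fin k, (j = i ∨ H1.Adj i j) → x j = 1) →
    ∃ y : Fin k → Fin 2, H2.Adj x y ∧ y i ≠ x i

/-- The family `B_k`, as a set of graphs on `[k] ⊔ [2]^k`. -/
def Bset (k : ℕ) : Set (SimpleGraph (Fin k ⊕ (Fin k → Fin 2))) :=
  {G | ∃ H1 H2, BCond H1 H2 ∧ G = comp2 H1 H2}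

/-- `H2` is `H1`-minimal. -/
def H1Minimal {k : ℕ} (H1 : SimpleGraph (Fin k)) (H2 : SimpleGraph (Fin k → Fin 2)) : Prop :=
  comp2 H1 H2 ∈ Bset k ∧
    ∀ H2' : SimpleGraph (Fin k → Fin 2), H2' < H2 → comp2 H1 H2' ∉ Bset k

/-- The graph `U_k` on `[2]^k`, with unique edge `{(1,…,1), (2,…,2)}`. -/
def Uk (k : ℕ) : SimpleGraph (Fin k → Fin 2) :=
  SimpleGraph.fromEdgeSet {s(fun _ => (0 : Fin 2), fun _ => (1 : Fin 2))}

/-- The graph `V_k` on `[2]^k`, whose edges join `(2,…,2)` to the tuples having exactly one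
entry equal to `1`. -/
def Vk (k : ℕ) : SimpleGraph (Fin k → Fin 2) :=
  SimpleGraph.fromEdgeSet
    {e | ∃ i : Fin k, e = s(Function.update (fun _ => (1 : Fin 2)) i 0, fun _ => (1 : Fin 2))}

/-- The graph `R_k` on `[2]^k`: the perfect matching pairing each tuple with its complement. -/
def Rk (k : ℕ) : SimpleGraph (Fin k → Fin 2) :=
  SimpleGraph.fromRel fun x y => ∀ i, x i ≠ y i

/-- The hypercube graph `Q_k` on `[2]^k`: tuples are adjacent when they differ in exactly one
coordinate. -/
def Qk (k : ℕ) : SimpleGraph (Fin k → Fin 2) :=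
  SimpleGraph.fromRel fun x y => ∃ i, x i ≠ y i ∧ ∀ j, j ≠ i → x j = y j

/-! ### The family `C_k`.
Tuples in `[3]^k` are modelled as functions `Fin k → Fin 3`, the `Fin 3`-value `j`
corresponding to the entry `j + 1 ∈ {1, 2, 3}`. -/

/-- Entries `a` and `b` (of `{1,2,3}`, coded in `Fin 3`) satisfy `|a - b| ≤ 1`. -/
def near3 (a b : Fin 3) : Prop := (a : ℕ) ≤ (b : ℕ) + 1 ∧ (b : ℕ) ≤ (a : ℕ) + 1

/-- `{x, y}` is an edge of the bipartite graph `C_i^k` (between `i`-th entry `1` and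
`i`-th entry `2`, with all other entries differing by at most `1`). -/
def CAdj {k : ℕ} (i : Fin k) (x y : Fin k → Fin 3) : Prop :=
  ((x i = 0 ∧ y i = 1) ∨ (x i = 1 ∧ y i = 0)) ∧ ∀ t, t ≠ i → near3 (x t) (y t)

/-- `{x, y}` is an edge of the bipartite graph `D_i^k` (between `i`-th entry `2` and
`i`-th entry `3`, with all other entries differing by at most `1`). -/
def DAdj {k : ℕ} (i : Fin k) (x y : Fin k → Fin 3) : Prop :=
  ((x i = 1 ∧ y i = 2) ∨ (x i = 2 ∧ y i = 1)) ∧ ∀ t, t ≠ i → near3 (x t) (y t)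

/-- The graph `K̄_[k] ∘ H2` on `[k] ⊔ [3]^k`. -/
def comp3 {k : ℕ} (H2 : SimpleGraph (Fin k → Fin 3)) :
    SimpleGraph (Fin k ⊕ (Fin k → Fin 3)) where
  Adj a b :=
    match a, b with
    | Sum.inl _, Sum.inl _ => False
    | Sum.inr x, Sum.inr y => H2.Adj x y
    | Sum.inl i, Sum.inr x => x i = 0
    | Sum.inr x, Sum.inl i => x i = 0
  symm := ⟨by
    rintro (i | x) (j | y) h
    · exact h
    · exact h
    · exact h
    · exact H2.adj_symm h⟩
  loopless := ⟨by
    rintro (i | x) h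
    · exact h
    · exact H2.irrefl h⟩

/-- The defining condition of `C_k`: every edge of `H2` lies in some `C_i^k` or `D_i^k`;
for each `i` the edges of `H2` in `C_i^k` cover `[3]^k_i(2)`, and the edges of `H2` in
`D_i^k` cover `S_i^k`. -/
def CCond {k : ℕ} (H2 : SimpleGraph (Fin k → Fin 3)) : Prop :=
  (∀ x y, H2.Adj x y → ∃ i, CAdj i x y ∨ DAdj i x y) ∧
  (∀ (i : Fin k) (x : Fin k → Fin 3), x i = 1 → ∃ y, H2.Adj x y ∧ CAdj i x y) ∧
  (∀ (i : Fin k) (x : Fin k → Fin 3), x i = 2 → (∀ t, x t ≠ 0) →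
    ∃ y, H2.Adj x y ∧ DAdj i x y)

/-- The family `C_k`, as a set of graphs on `[k] ⊔ [3]^k`. -/
def Cset (k : ℕ) : Set (SimpleGraph (Fin k ⊕ (Fin k → Fin 3))) :=
  {G | ∃ H2, CCond H2 ∧ G = comp3 H2}

/-- The graph `Γ_k` on `[3]^k`: distinct tuples are adjacent when all their entries differ
by at most `1`. -/
def GammaK (k : ℕ) : SimpleGraph (Fin k → Fin 3) :=
  SimpleGraph.fromRel fun x y => ∀ i, near3 (x i) (y i)

/-- `H2` is `k`-minimal. -/
def KMinimalC {k : ℕ} (H2 : SimpleGraph (Fin k → Fin 3)) : Prop :=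
  comp3 H2 ∈ Cset k ∧
    ∀ H2' : SimpleGraph (Fin k → Fin 3), H2' < H2 → comp3 H2' ∉ Cset k

section MyAux
variable {V : Type*} {W : Type*} {G : SimpleGraph V} {H : SimpleGraph W}

lemma myAdjDistLe (hc : G.Connected) {u v : V} (h : G.Adj u v) (a : V) :
    G.dist a v ≤ G.dist a u + 1 := by
  have := hc.dist_triangle (u := a) (v := u) (w := v)
  rwa [dist_eq_one_iff_adj.2 h] at this

lemma myExistsAdjDist (hc : G.Connected) {u v : V} {d : ℕ} (h : G.dist u v = d + 1) :
    ∃ z, G.Adj u z ∧ G.dist z v = d := by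
  obtain ⟨p, hp⟩ := hc.exists_walk_length_eq_dist u v
  rw [h] at hp
  cases p with
  | nil => simp at hp
  | @cons _ z _ hadj q =>
    refine ⟨z, hadj, le_antisymm ?_ ?_⟩
    · have := dist_le q
      simp only [Walk.length_cons] at hp
      omega
    · have h1 : G.dist u z = 1 := dist_eq_one_iff_adj.2 hadj
      have := hc.dist_triangle (u := u) (v := z) (w := v)
      omega

lemma myExistsAdjDist' (hc : G.Connected) {u v : V} {d : ℕ} (h : G.dist u v = d + 1) :
    ∃ z, G.Adj z v ∧ G.dist u z = d := by
  obtain ⟨z, hz, hd⟩ := myExistsAdjDist hc (show G.dist v u = d + 1 by rwa [dist_comm] at h)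
  exact ⟨z, hz.symm, by rwa [dist_comm] at hd⟩

lemma myIsoReachable (e : G ≃g H) {u v : V} (h : G.Reachable u v) :
    H.Reachable (e u) (e v) := h.map e.toHom

lemma myIsoDistLe (e : G ≃g H) (u v : V) : H.dist (e u) (e v) ≤ G.dist u v := by
  by_cases hr : G.Reachable u v
  · obtain ⟨p, hp⟩ := hr.exists_walk_length_eq_dist
    rw [← hp, ← Walk.length_map (f := e.toHom) (p := p)]
    exact dist_le _
  · have hr2 : ¬ H.Reachable (e u) (e v) := by
      intro h
      exact hr (by have := h.map e.symm.toHom; simpa using this)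
    rw [dist_eq_zero_of_not_reachable hr, dist_eq_zero_of_not_reachable hr2]

lemma myIsoDist (e : G ≃g H) (u v : V) : H.dist (e u) (e v) = G.dist u v := by
  refine le_antisymm (myIsoDistLe e u v) ?_
  have := myIsoDistLe e.symm (e u) (e v)
  simpa using this

lemma myIsoConnected (e : G ≃g H) (h : G.Connected) : H.Connected := by
  rw [connected_iff] at h ⊢
  refine ⟨fun a b => ?_, ⟨e h.2.some⟩⟩
  have := (h.1 (e.symm a) (e.symm b)).map e.toHom
  simpa using this

lemma myCrsOfIso (e : G ≃g H) {k m : ℕ} {w : Fin k → W} (hw : IsCRS H w m) :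
    IsCRS G (fun i => e.symm (w i)) m := by
  obtain ⟨hinj, hne, hminj, hrange⟩ := hw
  have hdist : ∀ (i : Fin k) (u : V), G.dist (e.symm (w i)) u = H.dist (w i) (e u) := by
    intro i u
    have := myIsoDist e.symm (w i) (e u)
    simpa using this
  have hmem : ∀ u : V, u ∉ Set.range (fun i => e.symm (w i)) ↔ (e u) ∉ Set.range w := by
    intro u
    constructor
    · rintro h ⟨i, hi⟩
      exact h ⟨i, by simp only []; rw [hi]; simp⟩
    · rintro h ⟨i, hi⟩
      exact h ⟨i, by rw [← hi]; simp⟩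
  refine ⟨fun i j hij => hinj (e.symm.injective hij), ?_, ?_, ?_⟩
  · intro hu
    obtain ⟨z, hz⟩ : ∃ z, z ∉ Set.range w := by
      by_contra hc
      push_neg at hc
      exact hne (Set.eq_univ_of_forall hc)
    have : e.symm z ∈ Set.range (fun i => e.symm (w i)) := by rw [hu]; trivial
    obtain ⟨i, hi⟩ := this
    exact hz ⟨i, e.symm.injective hi⟩
  · intro u1 u2 h
    simp only at h
    have h1 : (fun i : Fin k => H.dist (w i) (e u1.1)) = fun i => H.dist (w i) (e u2.1) := by
      funext i
      rw [← hdist, ← hdist]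
      exact congrFun h i
    have := hminj (a₁ := ⟨e u1.1, (hmem u1.1).1 u1.2⟩) (a₂ := ⟨e u2.1, (hmem u2.1).1 u2.2⟩)
      (by simpa using h1)
    exact Subtype.ext (e.injective (by simpa using congrArg Subtype.val this))
  · ext x
    constructor
    · rintro ⟨u, rfl⟩
      have : (fun u : {u : V // u ∉ Set.range fun i => e.symm (w i)} =>
          fun i : Fin k => G.dist ((fun i => e.symm (w i)) i) u.1) u =
          fun i => H.dist (w i) (e u.1) := by funext i; exact hdist i u.1
      rw [this, ← hrange]
      exact ⟨⟨e u.1, (hmem u.1).1 u.2⟩, rfl⟩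
    · intro hx
      rw [← hrange] at hx
      obtain ⟨v, hv⟩ := hx
      refine ⟨⟨e.symm v.1, ?_⟩, ?_⟩
      · rw [hmem]
        simpa using v.2
      · funext i
        simp only [← hv]
        rw [hdist]
        simp

lemma crsSurj {k m : ℕ} {w : Fin k → V} (hw : IsCRS G w m) (x : Fin k → ℕ) (hx : ∀ i, 1 ≤ x i ∧ x i ≤ m) :
    ∃ u, u ∉ Set.range w ∧ ∀ i, G.dist (w i) u = x i := by
  have := hw.2.2.2
  have hx2 : x ∈ {x : Fin k → ℕ | ∀ i, 1 ≤ x i ∧ x i ≤ m} := hx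
  rw [← this] at hx2
  obtain ⟨u, hu⟩ := hx2
  exact ⟨u.1, u.2, fun i => congrFun hu i⟩

lemma crsMem {k m : ℕ} {w : Fin k → V} (hw : IsCRS G w m) {u : V} (hu : u ∉ Set.range w) (i : Fin k) :
    1 ≤ G.dist (w i) u ∧ G.dist (w i) u ≤ m := by
  have := hw.2.2.2
  have h2 : (fun i : Fin k => G.dist (w i) u) ∈
      Set.range (fun u : {u : V // u ∉ Set.range w} => fun i : Fin k => G.dist (w i) u.1) :=
    ⟨⟨u, hu⟩, rfl⟩
  rw [this] at h2
  exact h2 i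

lemma crsVecInj {k m : ℕ} {w : Fin k → V} (hw : IsCRS G w m) {u v : V} (hu : u ∉ Set.range w) (hv : v ∉ Set.range w)
    (h : ∀ i, G.dist (w i) u = G.dist (w i) v) : u = v := by
  have := hw.2.2.1 (a₁ := ⟨u, hu⟩) (a₂ := ⟨v, hv⟩) (funext h)
  exact congrArg Subtype.val this

lemma crsNotUniv {k m : ℕ} {w : Fin k → V} (hw : IsCRS G w m) : ∃ u, u ∉ Set.range w := by
  by_contra hceq
  push_neg at hceq
  exact hw.2.1 (Set.eq_univ_of_forall hceq)


lemma fwdUniv (hc : G.Connected) {k : ℕ} {w : Fin k → V} (hw : IsCRS G w 1) :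
    ∃ v : V, ∀ u : V, u ≠ v → G.Adj v u := by
  obtain ⟨u0, hu0⟩ := crsNotUniv hw
  refine ⟨u0, fun v hv => ?_⟩
  by_cases hvr : v ∈ Set.range w
  · obtain ⟨i, rfl⟩ := hvr
    have h1 := crsMem hw hu0 i
    have : G.dist (w i) u0 = 1 := by omega
    exact (dist_eq_one_iff_adj.1 this).symm
  · exfalso
    exact hv (crsVecInj hw hvr hu0 (fun i => by
      have h1 := crsMem hw hvr i
      have h2 := crsMem hw hu0 i
      omega))

lemma fwdMLe3 (hc : G.Connected) {k m : ℕ} (hk : 2 ≤ k) {w : Fin k → V}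
    (hw : IsCRS G w m) (hm : 1 ≤ m) : m ≤ 3 := by
  have h01 : (⟨1, by omega⟩ : Fin k) ≠ ⟨0, by omega⟩ := by
    intro h; simpa using congrArg Fin.val h
  obtain ⟨u, hu, hud⟩ := crsSurj hw (Function.update (fun _ => 1) (⟨0, by omega⟩ : Fin k) m)
    (fun i => by
      by_cases hi : i = ⟨0, by omega⟩
      · subst hi; rw [Function.update_self]; exact ⟨hm, le_rfl⟩
      · rw [Function.update_of_ne hi]; exact ⟨le_rfl, hm⟩)
  obtain ⟨u1, hu1, hu1d⟩ := crsSurj hw (fun _ => 1)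
    (fun i => by show 1 ≤ 1 ∧ 1 ≤ m; omega)
  have h0 : G.dist (w ⟨0, by omega⟩) u = m := by rw [hud]; simp
  have h1 : G.dist (w ⟨1, by omega⟩) u = 1 := by
    rw [hud ⟨1, by omega⟩, Function.update_of_ne h01]
  have t1 := hc.dist_triangle (u := w ⟨0, by omega⟩) (v := w ⟨1, by omega⟩) (w := u)
  have t2 := hc.dist_triangle (u := w ⟨0, by omega⟩) (v := u1) (w := w ⟨1, by omega⟩)
  have e1 : G.dist (w ⟨0, by omega⟩) u1 = 1 := hu1d _
  have e2 : G.dist u1 (w ⟨1, by omega⟩) = 1 := by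
    rw [SimpleGraph.dist_comm]; exact hu1d _
  omega

lemma fwdPath (hc : G.Connected) {m : ℕ} {w : Fin 1 → V} (hw : IsCRS G w m) :
    ∃ n, Nonempty (G ≃g pathGraph n) := by
  have hrg : ∀ u : V, u ∉ Set.range w ↔ u ≠ w 0 := by
    intro u
    rw [Set.range_unique]
    simp [Fin.default_eq_zero]
  have dinj : ∀ u v : V, G.dist (w 0) u = G.dist (w 0) v → u = v := by
    intro u v h
    by_cases hu : u = w 0
    · subst hu
      rw [SimpleGraph.dist_self] at h
      exact (hc.dist_eq_zero_iff).1 h.symm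
    · by_cases hv : v = w 0
      · subst hv
        rw [SimpleGraph.dist_self] at h
        exact ((hc.dist_eq_zero_iff).1 h).symm
      · refine crsVecInj hw ((hrg u).2 hu) ((hrg v).2 hv) (fun i => ?_)
        have : i = 0 := Subsingleton.elim _ _
        subst this
        exact h
  have dlt : ∀ v, G.dist (w 0) v < m + 1 := by
    intro v
    by_cases hv : v = w 0
    · subst hv; rw [SimpleGraph.dist_self]; omega
    · have := crsMem hw ((hrg v).2 hv) 0
      omega
  set φ : V → Fin (m + 1) := fun v => ⟨G.dist (w 0) v, dlt v⟩ with hφ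
  have φbij : Function.Bijective φ := by
    constructor
    · intro u v h
      exact dinj u v (by simpa [hφ, Fin.ext_iff] using h)
    · intro j
      by_cases hj : (j : ℕ) = 0
      · refine ⟨w 0, ?_⟩
        rw [hφ]
        apply Fin.ext
        show G.dist (w 0) (w 0) = (j : ℕ)
        rw [SimpleGraph.dist_self]
        omega
      · obtain ⟨u, hu, hud⟩ := crsSurj hw (fun _ => (j : ℕ))
          (fun i => by
            show 1 ≤ (j : ℕ) ∧ (j : ℕ) ≤ m
            have := j.isLt; omega)
        refine ⟨u, ?_⟩
        rw [hφ]
        apply Fin.ext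
        show G.dist (w 0) u = (j : ℕ)
        exact hud 0
  have adj_iff : ∀ u v : V, (pathGraph (m + 1)).Adj (Equiv.ofBijective φ φbij u)
      (Equiv.ofBijective φ φbij v) ↔ G.Adj u v := by
    intro u v
    rw [pathGraph_adj]
    have hval : ∀ a : V, ((Equiv.ofBijective φ φbij a : Fin (m + 1)) : ℕ) = G.dist (w 0) a :=
      fun a => rfl
    rw [hval, hval]
    constructor
    · rintro (h | h)
      · obtain ⟨z, hz1, hz2⟩ := myExistsAdjDist' hc h.symm
        have : z = u := dinj z u hz2
        subst this
        exact hz1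
      · obtain ⟨z, hz1, hz2⟩ := myExistsAdjDist' hc h.symm
        have : z = v := dinj z v hz2
        subst this
        exact hz1.symm
    · intro h
      have l1 := myAdjDistLe hc h (w 0)
      have l2 := myAdjDistLe hc h.symm (w 0)
      have hne : G.dist (w 0) u ≠ G.dist (w 0) v := fun he => G.ne_of_adj h (dinj u v he)
      omega
  exact ⟨m + 1, ⟨⟨Equiv.ofBijective φ φbij, by intro a b; exact adj_iff a b⟩⟩⟩

lemma fwdB (hc : G.Connected) {k : ℕ} {w : Fin k → V} (hw : IsCRS G w 2) :
    ∃ H ∈ Bset k, Nonempty (G ≃g H) := by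
  classical
  obtain ⟨hinj, hne, hminj, hrange⟩ := id hw
  have hex : ∀ x : Fin k → Fin 2, ∃ u, u ∉ Set.range w ∧ ∀ i, G.dist (w i) u = (x i : ℕ) + 1 :=
    fun x => crsSurj hw (fun i => (x i : ℕ) + 1)
      (fun i => by
        show 1 ≤ (x i : ℕ) + 1 ∧ (x i : ℕ) + 1 ≤ 2
        have := (x i).isLt
        omega)
  choose g hg1 hg2 using hex
  have hcode : ∀ u, u ∉ Set.range w → ∃ x : Fin k → Fin 2, g x = u := by
    intro u hu
    refine ⟨fun i => ⟨G.dist (w i) u - 1, by have := crsMem hw hu i; omega⟩, ?_⟩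
    apply crsVecInj hw (hg1 _) hu
    intro i
    rw [hg2]
    have := crsMem hw hu i
    show (G.dist (w i) u - 1) + 1 = G.dist (w i) u
    omega
  have ginj : Function.Injective g := by
    intro x y h
    funext i
    have hx := hg2 x i
    have hy := hg2 y i
    rw [h] at hx
    apply Fin.ext
    omega
  set f : Fin k ⊕ (Fin k → Fin 2) → V := Sum.elim w g with hf
  have fbij : Function.Bijective f := by
    constructor
    · rintro (i | x) (j | y) h
      · simp only [hf, Sum.elim_inl] at h
        rw [hinj h]
      · exact absurd ⟨i, h⟩ (hg1 y)
      · exact absurd ⟨j, h.symm⟩ (hg1 x)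
      · simp only [hf, Sum.elim_inr] at h
        rw [ginj h]
    · intro v
      by_cases hv : v ∈ Set.range w
      · obtain ⟨i, rfl⟩ := hv
        exact ⟨Sum.inl i, rfl⟩
      · obtain ⟨x, hx⟩ := hcode v hv
        exact ⟨Sum.inr x, hx⟩
  set e := Equiv.ofBijective f fbij with he
  set H1 := G.comap w with hH1
  set H2 := G.comap g with hH2
  have hadj1 : ∀ (i : Fin k) (x : Fin k → Fin 2), G.Adj (w i) (g x) ↔ x i = 0 := by
    intro i x
    rw [← SimpleGraph.dist_eq_one_iff_adj, hg2, Fin.ext_iff]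
    have := (x i).isLt
    simp only [Fin.val_zero]
    omega
  have hB : BCond H1 H2 := by
    intro i x hx
    have hxi : x i = 1 := hx i (Or.inl rfl)
    have hdi : G.dist (w i) (g x) = 2 := by rw [hg2 x i, hxi]; rfl
    obtain ⟨z, hz1, hz2⟩ := myExistsAdjDist' hc hdi
    by_cases hzr : z ∈ Set.range w
    · obtain ⟨j, rfl⟩ := hzr
      exfalso
      have hadjij : G.Adj (w i) (w j) := SimpleGraph.dist_eq_one_iff_adj.1 hz2
      have hxj : x j = 1 := hx j (Or.inr hadjij)
      have h2 : G.dist (w j) (g x) = 1 := SimpleGraph.dist_eq_one_iff_adj.2 hz1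
      rw [hg2 x j, hxj] at h2
      simp at h2
    · obtain ⟨y, rfl⟩ := hcode z hzr
      refine ⟨y, hz1.symm, fun hyx => ?_⟩
      have h3 := hg2 y i
      rw [hz2, hyx, hxi] at h3
      simp at h3
  refine ⟨comp2 H1 H2, ⟨H1, H2, hB, rfl⟩, ⟨?_⟩⟩
  have key : ∀ s t, (comp2 H1 H2).Adj s t ↔ G.Adj (f s) (f t) := by
    rintro (i | x) (j | y)
    · exact Iff.rfl
    · show y i = 0 ↔ G.Adj (w i) (g y)
      exact (hadj1 i y).symm
    · show x j = 0 ↔ G.Adj (g x) (w j)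
      rw [SimpleGraph.adj_comm]
      exact (hadj1 j x).symm
    · exact Iff.rfl
  refine ⟨e.symm, fun {a b} => ?_⟩
  rw [key]
  rw [show f (e.symm a) = a from e.apply_symm_apply a,
      show f (e.symm b) = b from e.apply_symm_apply b]

lemma fwdC (hc : G.Connected) {k : ℕ} {w : Fin k → V} (hw : IsCRS G w 3) :
    ∃ H ∈ Cset k, Nonempty (G ≃g H) := by
  classical
  obtain ⟨hinj, hne, hminj, hrange⟩ := id hw
  have hex : ∀ x : Fin k → Fin 3, ∃ u, u ∉ Set.range w ∧ ∀ i, G.dist (w i) u = (x i : ℕ) + 1 :=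
    fun x => crsSurj hw (fun i => (x i : ℕ) + 1)
      (fun i => by
        show 1 ≤ (x i : ℕ) + 1 ∧ (x i : ℕ) + 1 ≤ 3
        have := (x i).isLt
        omega)
  choose g hg1 hg2 using hex
  have hcode : ∀ u, u ∉ Set.range w → ∃ x : Fin k → Fin 3, g x = u := by
    intro u hu
    refine ⟨fun i => ⟨G.dist (w i) u - 1, by have := crsMem hw hu i; omega⟩, ?_⟩
    apply crsVecInj hw (hg1 _) hu
    intro i
    rw [hg2]
    have := crsMem hw hu i
    show (G.dist (w i) u - 1) + 1 = G.dist (w i) u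
    omega
  have ginj : Function.Injective g := by
    intro x y h
    funext i
    have hx := hg2 x i
    have hy := hg2 y i
    rw [h] at hx
    apply Fin.ext
    omega
  set f : Fin k ⊕ (Fin k → Fin 3) → V := Sum.elim w g with hf
  have fbij : Function.Bijective f := by
    constructor
    · rintro (i | x) (j | y) h
      · simp only [hf, Sum.elim_inl] at h
        rw [hinj h]
      · exact absurd ⟨i, h⟩ (hg1 y)
      · exact absurd ⟨j, h.symm⟩ (hg1 x)
      · simp only [hf, Sum.elim_inr] at h
        rw [ginj h]
    · intro v
      by_cases hv : v ∈ Set.range w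
      · obtain ⟨i, rfl⟩ := hv
        exact ⟨Sum.inl i, rfl⟩
      · obtain ⟨x, hx⟩ := hcode v hv
        exact ⟨Sum.inr x, hx⟩
  set e := Equiv.ofBijective f fbij with he
  have hWind : ∀ i j : Fin k, ¬ G.Adj (w i) (w j) := by
    intro i j hadj
    have hij : j ≠ i := fun h => G.ne_of_adj hadj (by rw [h])
    obtain ⟨u, hu, hud⟩ := crsSurj hw (Function.update (fun _ => 1) i 3)
      (fun t => by
        by_cases ht : t = i
        · subst ht; rw [Function.update_self]; omega
        · rw [Function.update_of_ne ht]; omega)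
    have h3 : G.dist (w i) u = 3 := by rw [hud]; simp
    have h1 : G.dist (w j) u = 1 := by rw [hud j, Function.update_of_ne hij]
    have t := hc.dist_triangle (u := w i) (v := w j) (w := u)
    have hd1 : G.dist (w i) (w j) = 1 := SimpleGraph.dist_eq_one_iff_adj.2 hadj
    omega
  set H2 := G.comap g with hH2
  have hadj1 : ∀ (i : Fin k) (x : Fin k → Fin 3), G.Adj (w i) (g x) ↔ x i = 0 := by
    intro i x
    rw [← SimpleGraph.dist_eq_one_iff_adj, hg2, Fin.ext_iff]
    have := (x i).isLt
    simp only [Fin.val_zero]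
    omega
  have hnear : ∀ x y : Fin k → Fin 3, G.Adj (g x) (g y) → ∀ t, near3 (x t) (y t) := by
    intro x y hadj t
    have l1 := myAdjDistLe hc hadj (w t)
    have l2 := myAdjDistLe hc hadj.symm (w t)
    have ex := hg2 x t
    have ey := hg2 y t
    exact ⟨by omega, by omega⟩
  have hCC : CCond H2 := by
    refine ⟨?_, ?_, ?_⟩
    · intro x y hxy
      have hxy' : G.Adj (g x) (g y) := hxy
      have hne' : x ≠ y := fun h => (G.loopless.irrefl (g y)) (by rw [h] at hxy'; exact hxy')
      obtain ⟨i, hi⟩ : ∃ i, x i ≠ y i := by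
        by_contra hcon
        push_neg at hcon
        exact hne' (funext hcon)
      have hn := hnear x y hxy'
      obtain ⟨hn1, hn2⟩ := hn i
      have hne2 : (x i : ℕ) ≠ (y i : ℕ) := fun hh => hi (Fin.ext hh)
      have hx3 := (x i).isLt
      have hy3 := (y i).isLt
      refine ⟨i, ?_⟩
      have hvals : ((x i : ℕ) = 0 ∧ (y i : ℕ) = 1) ∨ ((x i : ℕ) = 1 ∧ (y i : ℕ) = 0) ∨
          ((x i : ℕ) = 1 ∧ (y i : ℕ) = 2) ∨ ((x i : ℕ) = 2 ∧ (y i : ℕ) = 1) := by omega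
      rcases hvals with ⟨h1, h2⟩ | ⟨h1, h2⟩ | ⟨h1, h2⟩ | ⟨h1, h2⟩
      · exact Or.inl ⟨Or.inl ⟨Fin.ext h1, Fin.ext h2⟩, fun t _ => hnear x y hxy' t⟩
      · exact Or.inl ⟨Or.inr ⟨Fin.ext h1, Fin.ext h2⟩, fun t _ => hnear x y hxy' t⟩
      · exact Or.inr ⟨Or.inl ⟨Fin.ext h1, Fin.ext h2⟩, fun t _ => hnear x y hxy' t⟩
      · exact Or.inr ⟨Or.inr ⟨Fin.ext h1, Fin.ext h2⟩, fun t _ => hnear x y hxy' t⟩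
    · intro i x hxi
      have hdi : G.dist (w i) (g x) = 2 := by rw [hg2 x i, hxi]; rfl
      obtain ⟨z, hz1, hz2⟩ := myExistsAdjDist' hc hdi
      by_cases hzr : z ∈ Set.range w
      · obtain ⟨j, rfl⟩ := hzr
        exact absurd (SimpleGraph.dist_eq_one_iff_adj.1 hz2) (hWind i j)
      · obtain ⟨y, rfl⟩ := hcode z hzr
        have hyi : y i = 0 := by
          have h3 := hg2 y i
          rw [hz2] at h3
          apply Fin.ext
          simp only [Fin.val_zero]
          omega
        exact ⟨y, hz1.symm, Or.inr ⟨hxi, hyi⟩, fun t _ => hnear x y hz1.symm t⟩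
    · intro i x hxi hxt
      have hdi : G.dist (w i) (g x) = 3 := by rw [hg2 x i, hxi]; rfl
      obtain ⟨z, hz1, hz2⟩ := myExistsAdjDist' hc hdi
      by_cases hzr : z ∈ Set.range w
      · obtain ⟨j, rfl⟩ := hzr
        exfalso
        have h1 : G.dist (w j) (g x) = 1 := SimpleGraph.dist_eq_one_iff_adj.2 hz1
        have h2 := hg2 x j
        rw [h1] at h2
        exact hxt j (Fin.ext (by simp only [Fin.val_zero]; omega))
      · obtain ⟨y, rfl⟩ := hcode z hzr
        have hyi : y i = 1 := by
          have h3 := hg2 y i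
          rw [hz2] at h3
          apply Fin.ext
          show (y i : ℕ) = 1
          omega
        exact ⟨y, hz1.symm, Or.inr ⟨hxi, hyi⟩, fun t _ => hnear x y hz1.symm t⟩
  refine ⟨comp3 H2, ⟨H2, hCC, rfl⟩, ⟨?_⟩⟩
  have key : ∀ s t, (comp3 H2).Adj s t ↔ G.Adj (f s) (f t) := by
    rintro (i | x) (j | y)
    · exact iff_of_false id (hWind i j)
    · show y i = 0 ↔ G.Adj (w i) (g y)
      exact (hadj1 i y).symm
    · show x j = 0 ↔ G.Adj (g x) (w j)
      rw [SimpleGraph.adj_comm]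
      exact (hadj1 j x).symm
    · exact Iff.rfl
  refine ⟨e.symm, fun {a b} => ?_⟩
  rw [key]
  rw [show f (e.symm a) = a from e.apply_symm_apply a,
      show f (e.symm b) = b from e.apply_symm_apply b]

lemma crsComp2 {k : ℕ} {H1 : SimpleGraph (Fin k)} {H2 : SimpleGraph (Fin k → Fin 2)}
    (hc : (comp2 H1 H2).Connected) (hB : BCond H1 H2) :
    IsCRS (comp2 H1 H2) (fun i => (Sum.inl i : Fin k ⊕ (Fin k → Fin 2))) 2 := by
  set K := comp2 H1 H2 with hK
  have hadj : ∀ (i : Fin k) (x : Fin k → Fin 2),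
      K.Adj (Sum.inl i) (Sum.inr x) ↔ x i = 0 := fun i x => Iff.rfl
  have hdist : ∀ (i : Fin k) (x : Fin k → Fin 2),
      K.dist (Sum.inl i) (Sum.inr x) = (x i : ℕ) + 1 := by
    intro i x
    by_cases hxi : x i = 0
    · rw [hxi]
      exact SimpleGraph.dist_eq_one_iff_adj.2 ((hadj i x).2 hxi)
    · have hxi1 : x i = 1 := by
        have := (x i).isLt
        apply Fin.ext
        have : (x i : ℕ) ≠ 0 := fun h => hxi (Fin.ext h)
        show (x i : ℕ) = 1
        omega
      have hub : K.dist (Sum.inl i) (Sum.inr x) ≤ 2 := by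
        by_cases hj : ∃ j, H1.Adj i j ∧ x j = 0
        · obtain ⟨j, hj1, hj2⟩ := hj
          have a1 : K.Adj (Sum.inl i) (Sum.inl j) := hj1
          have a2 : K.Adj (Sum.inl j) (Sum.inr x) := hj2
          have := SimpleGraph.dist_le (Walk.cons a1 (Walk.cons a2 Walk.nil))
          simpa using this
        · push_neg at hj
          obtain ⟨y, hy1, hy2⟩ := hB i x (fun j hji => by
            rcases hji with rfl | hadjij
            · exact hxi1
            · have := hj j hadjij
              have hlt := (x j).isLt
              apply Fin.ext
              have : (x j : ℕ) ≠ 0 := fun h => this (Fin.ext h)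
              show (x j : ℕ) = 1
              omega)
          have hy0 : y i = 0 := by
            rw [hxi1] at hy2
            have := (y i).isLt
            apply Fin.ext
            have : (y i : ℕ) ≠ 1 := fun h => hy2 (Fin.ext (by simpa using h))
            show (y i : ℕ) = 0
            omega
          have a1 : K.Adj (Sum.inl i) (Sum.inr y) := hy0
          have a2 : K.Adj (Sum.inr y) (Sum.inr x) := hy1.symm
          have := SimpleGraph.dist_le (Walk.cons a1 (Walk.cons a2 Walk.nil))
          simpa using this
      have hne0 : K.dist (Sum.inl i) (Sum.inr x) ≠ 0 := by
        intro h
        exact (by simp : (Sum.inl i : Fin k ⊕ (Fin k → Fin 2)) ≠ Sum.inr x)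
          (hc.dist_eq_zero_iff.1 h)
      have hne1 : K.dist (Sum.inl i) (Sum.inr x) ≠ 1 := by
        intro h
        exact hxi ((hadj i x).1 (SimpleGraph.dist_eq_one_iff_adj.1 h))
      rw [hxi1]
      show K.dist (Sum.inl i) (Sum.inr x) = 2
      omega
  refine ⟨fun i j h => by simpa using h, ?_, ?_, ?_⟩
  · intro h
    have : (Sum.inr (fun _ => (0 : Fin 2)) : Fin k ⊕ (Fin k → Fin 2)) ∈
        Set.range (fun i => (Sum.inl i : Fin k ⊕ (Fin k → Fin 2))) := by
      rw [h]; trivial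
    obtain ⟨i, hi⟩ := this
    simp at hi
  · intro u1 u2 h
    obtain ⟨x, hx⟩ : ∃ x, u1.1 = Sum.inr x := by
      rcases hu : u1.1 with i | x
      · exact absurd ⟨i, rfl⟩ (hu ▸ u1.2)
      · exact ⟨x, rfl⟩
    obtain ⟨y, hy⟩ : ∃ y, u2.1 = Sum.inr y := by
      rcases hu : u2.1 with i | y
      · exact absurd ⟨i, rfl⟩ (hu ▸ u2.2)
      · exact ⟨y, rfl⟩
    apply Subtype.ext
    rw [hx, hy]
    congr 1
    funext i
    have := congrFun h i
    simp only [hx, hy, hdist] at this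
    apply Fin.ext
    omega
  · ext z
    simp only [Set.mem_range, Set.mem_setOf_eq]
    constructor
    · rintro ⟨u, rfl⟩
      intro i
      obtain ⟨x, hx⟩ : ∃ x, u.1 = Sum.inr x := by
        rcases hu : u.1 with i | x
        · exact absurd ⟨i, rfl⟩ (hu ▸ u.2)
        · exact ⟨x, rfl⟩
      simp only [hx, hdist]
      have := (x i).isLt
      omega
    · intro hz
      refine ⟨⟨Sum.inr (fun i => ⟨z i - 1, by have := (hz i).2; omega⟩), by simp⟩, ?_⟩
      funext i
      simp only [hdist]
      have := (hz i).1
      show (z i - 1) + 1 = z i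
      omega

lemma crsComp3 {k : ℕ} {H2 : SimpleGraph (Fin k → Fin 3)}
    (hc : (comp3 H2).Connected) (hC : CCond H2) :
    IsCRS (comp3 H2) (fun i => (Sum.inl i : Fin k ⊕ (Fin k → Fin 3))) 3 := by
  obtain ⟨hC1, hC2, hC3⟩ := hC
  set K := comp3 H2 with hK
  have hadj : ∀ (i : Fin k) (x : Fin k → Fin 3),
      K.Adj (Sum.inl i) (Sum.inr x) ↔ x i = 0 := fun i x => Iff.rfl
  -- any H2-neighbour of x has entries within 1 of x
  have hstep : ∀ x y : Fin k → Fin 3, H2.Adj x y → ∀ t,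
      (x t : ℕ) ≤ (y t : ℕ) + 1 ∧ (y t : ℕ) ≤ (x t : ℕ) + 1 := by
    intro x y hxy t
    obtain ⟨j, hj⟩ := hC1 x y hxy
    by_cases hjt : t = j
    · subst hjt
      rcases hj with ⟨h1, _⟩ | ⟨h1, _⟩ <;>
        rcases h1 with ⟨ha, hb⟩ | ⟨ha, hb⟩ <;> rw [ha, hb] <;> simp
    · rcases hj with ⟨_, h2⟩ | ⟨_, h2⟩ <;> exact (h2 t hjt)
  have hdist : ∀ (i : Fin k) (x : Fin k → Fin 3),
      K.dist (Sum.inl i) (Sum.inr x) = (x i : ℕ) + 1 := by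
    intro i x
    have hne0 : K.dist (Sum.inl i) (Sum.inr x) ≠ 0 := by
      intro h
      exact (by simp : (Sum.inl i : Fin k ⊕ (Fin k → Fin 3)) ≠ Sum.inr x)
        (hc.dist_eq_zero_iff.1 h)
    have hisLt := (x i).isLt
    by_cases hxi : x i = 0
    · rw [hxi]
      exact SimpleGraph.dist_eq_one_iff_adj.2 ((hadj i x).2 hxi)
    · have hne1 : K.dist (Sum.inl i) (Sum.inr x) ≠ 1 := by
        intro h
        exact hxi ((hadj i x).1 (SimpleGraph.dist_eq_one_iff_adj.1 h))
      by_cases hxi1 : x i = 1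
      · -- distance 2
        obtain ⟨y, hy1, hy2⟩ := hC2 i x hxi1
        have hy0 : y i = 0 := by
          rcases hy2.1 with ⟨ha, _⟩ | ⟨_, hb⟩
          · rw [hxi1] at ha; exact absurd ha (by decide)
          · exact hb
        have a1 : K.Adj (Sum.inl i) (Sum.inr y) := hy0
        have a2 : K.Adj (Sum.inr y) (Sum.inr x) := hy1.symm
        have hub := SimpleGraph.dist_le (Walk.cons a1 (Walk.cons a2 Walk.nil))
        simp only [Walk.length_cons, Walk.length_nil] at hub
        rw [hxi1]
        show K.dist (Sum.inl i) (Sum.inr x) = 2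
        omega
      · -- x i = 2, distance 3
        have hxi2 : x i = 2 := by
          apply Fin.ext
          have h0 : (x i : ℕ) ≠ 0 := fun h => hxi (Fin.ext h)
          have h1 : (x i : ℕ) ≠ 1 := fun h => hxi1 (Fin.ext h)
          show (x i : ℕ) = 2
          omega
        have hne2 : K.dist (Sum.inl i) (Sum.inr x) ≠ 2 := by
          intro h
          obtain ⟨z, hz1, hz2⟩ := myExistsAdjDist hc h
          rcases z with j | y
          · exact hz1
          · have hy0 : y i = 0 := hz1
            have hyx' : K.Adj (Sum.inr y) (Sum.inr x) := SimpleGraph.dist_eq_one_iff_adj.1 hz2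
            have hyx : H2.Adj y x := hyx'
            have := (hstep y x hyx i).2
            rw [hy0, hxi2] at this
            simp at this
        have hub : K.dist (Sum.inl i) (Sum.inr x) ≤ 3 := by
          by_cases ht : ∀ t, x t ≠ 0
          · obtain ⟨y, hy1, hy2⟩ := hC3 i x hxi2 ht
            have hy1' : y i = 1 := by
              rcases hy2.1 with ⟨ha, _⟩ | ⟨_, hb⟩
              · rw [hxi2] at ha; exact absurd ha (by decide)
              · exact hb
            obtain ⟨z, hzy, hzc⟩ := hC2 i y hy1'
            have hz0 : z i = 0 := by
              rcases hzc.1 with ⟨ha, _⟩ | ⟨_, hb⟩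
              · rw [hy1'] at ha; exact absurd ha (by decide)
              · exact hb
            have a1 : K.Adj (Sum.inl i) (Sum.inr z) := hz0
            have a2 : K.Adj (Sum.inr z) (Sum.inr y) := hzy.symm
            have a3 : K.Adj (Sum.inr y) (Sum.inr x) := hy1.symm
            have := SimpleGraph.dist_le (Walk.cons a1 (Walk.cons a2 (Walk.cons a3 Walk.nil)))
            simpa using this
          · push_neg at ht
            obtain ⟨t, ht0⟩ := ht
            have a1 : K.Adj (Sum.inl i) (Sum.inr (fun _ => (0 : Fin 3))) := rfl
            have a2 : K.Adj (Sum.inr (fun _ => (0 : Fin 3))) (Sum.inl t) := rfl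
            have a3 : K.Adj (Sum.inl t) (Sum.inr x) := ht0
            have := SimpleGraph.dist_le (Walk.cons a1 (Walk.cons a2 (Walk.cons a3 Walk.nil)))
            simpa using this
        rw [hxi2]
        show K.dist (Sum.inl i) (Sum.inr x) = 3
        omega
  refine ⟨fun i j h => by simpa using h, ?_, ?_, ?_⟩
  · intro h
    have : (Sum.inr (fun _ => (0 : Fin 3)) : Fin k ⊕ (Fin k → Fin 3)) ∈
        Set.range (fun i => (Sum.inl i : Fin k ⊕ (Fin k → Fin 3))) := by
      rw [h]; trivial
    obtain ⟨i, hi⟩ := this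
    simp at hi
  · intro u1 u2 h
    obtain ⟨x, hx⟩ : ∃ x, u1.1 = Sum.inr x := by
      rcases hu : u1.1 with i | x
      · exact absurd ⟨i, rfl⟩ (hu ▸ u1.2)
      · exact ⟨x, rfl⟩
    obtain ⟨y, hy⟩ : ∃ y, u2.1 = Sum.inr y := by
      rcases hu : u2.1 with i | y
      · exact absurd ⟨i, rfl⟩ (hu ▸ u2.2)
      · exact ⟨y, rfl⟩
    apply Subtype.ext
    rw [hx, hy]
    congr 1
    funext i
    have := congrFun h i
    simp only [hx, hy, hdist] at this
    apply Fin.ext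
    omega
  · ext z
    simp only [Set.mem_range, Set.mem_setOf_eq]
    constructor
    · rintro ⟨u, rfl⟩
      intro i
      obtain ⟨x, hx⟩ : ∃ x, u.1 = Sum.inr x := by
        rcases hu : u.1 with i | x
        · exact absurd ⟨i, rfl⟩ (hu ▸ u.2)
        · exact ⟨x, rfl⟩
      simp only [hx, hdist]
      have := (x i).isLt
      omega
    · intro hz
      refine ⟨⟨Sum.inr (fun i => ⟨z i - 1, by have := (hz i).2; omega⟩), by simp⟩, ?_⟩
      funext i
      simp only [hdist]
      have := (hz i).1
      show (z i - 1) + 1 = z i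
      omega

lemma pathWalkLB {n : ℕ} {u v : Fin n} (p : (pathGraph n).Walk u v) :
    (u : ℕ) ≤ (v : ℕ) + p.length ∧ (v : ℕ) ≤ (u : ℕ) + p.length := by
  induction p with
  | nil => simp
  | @cons a b c hab q ih =>
    rw [pathGraph_adj] at hab
    simp only [Walk.length_cons]
    omega

lemma pathDist {n : ℕ} (hn : 0 < n) (i : Fin n) :
    (pathGraph n).dist ⟨0, hn⟩ i = (i : ℕ) := by
  obtain ⟨n', rfl⟩ : ∃ n', n = n' + 1 := ⟨n - 1, by omega⟩
  have hc : (pathGraph (n' + 1)).Connected := pathGraph_connected n'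
  refine le_antisymm ?_ ?_
  · -- upper bound by induction on i.val
    suffices h : ∀ j (hj : j < n' + 1), (pathGraph (n' + 1)).dist ⟨0, hn⟩ ⟨j, hj⟩ ≤ j by
      have := h i i.isLt
      simpa using this
    intro j
    induction j with
    | zero => intro hj; rw [SimpleGraph.dist_self]
    | succ j' ih =>
      intro hj
      have hadj : (pathGraph (n' + 1)).Adj ⟨j', by omega⟩ ⟨j' + 1, hj⟩ := by
        rw [pathGraph_adj]; left; rfl
      have := myAdjDistLe hc hadj ⟨0, hn⟩
      have h2 := ih (by omega)
      omega
  · obtain ⟨p, hp⟩ := hc.exists_walk_length_eq_dist ⟨0, hn⟩ i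
    have := (pathWalkLB p).2
    simp only [hp] at this
    simpa using this

lemma pathCRS {n : ℕ} (hn : 2 ≤ n) :
    IsCRS (pathGraph n) (fun _ : Fin 1 => (⟨0, by omega⟩ : Fin n)) (n - 1) := by
  have h0 : (0 : ℕ) < n := by omega
  have hrg : ∀ u : Fin n, u ∉ Set.range (fun _ : Fin 1 => (⟨0, by omega⟩ : Fin n)) ↔
      u ≠ ⟨0, by omega⟩ := by
    intro u
    rw [Set.range_unique]
    simp
  refine ⟨fun a b _ => Subsingleton.elim a b, ?_, ?_, ?_⟩
  · intro h
    have : (⟨1, by omega⟩ : Fin n) ∈ Set.range (fun _ : Fin 1 => (⟨0, by omega⟩ : Fin n)) := by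
      rw [h]; trivial
    obtain ⟨_, hi⟩ := this
    simpa [Fin.ext_iff] using hi
  · intro u1 u2 h
    have h0' := congrFun h 0
    simp only [pathDist h0] at h0'
    exact Subtype.ext (Fin.ext h0')
  · ext z
    simp only [Set.mem_range, Set.mem_setOf_eq]
    constructor
    · rintro ⟨u, rfl⟩
      intro i
      simp only [pathDist h0]
      have hne := (hrg u.1).1 u.2
      have : (u.1 : ℕ) ≠ 0 := fun hh => hne (Fin.ext hh)
      have := u.1.isLt
      constructor <;> omega
    · intro hz
      have hz1 := (hz 0).1
      have hz2 := (hz 0).2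
      refine ⟨⟨⟨z 0, by omega⟩, (hrg _).2 (by simp [Fin.ext_iff]; omega)⟩, ?_⟩
      funext i
      have : i = 0 := Subsingleton.elim _ _
      subst this
      simp only [pathDist h0]

lemma bwdUniv {V : Type*} [Fintype V] {G : SimpleGraph V} {v : V}
    (hv : ∀ u : V, u ≠ v → G.Adj v u) : CompletenessResolvable G := by
  classical
  set k := Fintype.card {u : V // u ≠ v} with hk
  set e2 : Fin k ≃ {u : V // u ≠ v} := (Fintype.equivFin {u : V // u ≠ v}).symm with he2
  set w : Fin k → V := fun i => (e2 i).1 with hwdef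
  have hrg : ∀ u : V, u ∈ Set.range w ↔ u ≠ v := by
    intro u
    constructor
    · rintro ⟨i, rfl⟩
      exact (e2 i).2
    · intro h
      exact ⟨e2.symm ⟨u, h⟩, by simp [hwdef]⟩
  refine ⟨k, 1, w, fun a b h => ?_, ?_, ?_, ?_⟩
  · have : (e2 a) = (e2 b) := Subtype.ext h
    exact e2.injective this
  · intro h
    have : v ∈ Set.range w := by rw [h]; trivial
    exact (hrg v).1 this rfl
  · intro u1 u2 _
    apply Subtype.ext
    have h1 : u1.1 = v := by
      by_contra hc
      exact u1.2 ((hrg u1.1).2 hc)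
    have h2 : u2.1 = v := by
      by_contra hc
      exact u2.2 ((hrg u2.1).2 hc)
    rw [h1, h2]
  · ext z
    simp only [Set.mem_range, Set.mem_setOf_eq]
    have hdv : ∀ i, G.dist (w i) v = 1 := fun i =>
      SimpleGraph.dist_eq_one_iff_adj.2 (hv (w i) (e2 i).2).symm
    constructor
    · rintro ⟨u, rfl⟩
      intro i
      have h1 : u.1 = v := by
        by_contra hc
        exact u.2 ((hrg u.1).2 hc)
      simp only [h1, hdv]
      omega
    · intro hz
      refine ⟨⟨v, fun hc => (hrg v).1 hc rfl⟩, ?_⟩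
      funext i
      simp only [hdv]
      have := (hz i).1
      have := (hz i).2
      omega

lemma fwdK0 {V : Type*} [Fintype V] {G : SimpleGraph V} (hcard : 2 ≤ Fintype.card V)
    {w : Fin 0 → V} {m : ℕ} (hw : IsCRS G w m) : False := by
  obtain ⟨u, v, huv⟩ := Fintype.exists_pair_of_one_lt_card (α := V) (by omega)
  have hr : ∀ z : V, z ∉ Set.range w := by rintro z ⟨i, _⟩; exact i.elim0
  have := hw.2.2.1 (a₁ := ⟨u, hr u⟩) (a₂ := ⟨v, hr v⟩) (funext fun i => i.elim0)
  exact huv (congrArg Subtype.val this)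

lemma fwdM0 {k : ℕ} (hk : 1 ≤ k) {w : Fin k → V} (hw : IsCRS G w 0) : False := by
  obtain ⟨u, hu⟩ : ∃ u, u ∉ Set.range w := by
    by_contra h
    push_neg at h
    exact hw.2.1 (Set.eq_univ_of_forall h)
  have := crsMem hw hu ⟨0, by omega⟩
  omega

end MyAux

/-- **Theorem (Main).** A finite connected simple graph `G` with at least two vertices is
completeness-resolvable iff `G` is isomorphic to a path, or has a universal vertex, or is
isomorphic to a graph in `B_k` or in `C_k` for some `k ≥ 2`. -/
theorem completenessResolvable_iff {V : Type*} [Fintype V] (G : SimpleGraph V)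
    (hconn : G.Connected) (hcard : 2 ≤ Fintype.card V) :
    CompletenessResolvable G ↔
      (∃ n : ℕ, Nonempty (G ≃g SimpleGraph.pathGraph n)) ∨
      (∃ v : V, ∀ u : V, u ≠ v → G.Adj v u) ∨
      (∃ k : ℕ, 2 ≤ k ∧ ∃ H ∈ Bset k, Nonempty (G ≃g H)) ∨
      (∃ k : ℕ, 2 ≤ k ∧ ∃ H ∈ Cset k, Nonempty (G ≃g H)) := by
  constructor
  · rintro ⟨k, m, w, hw⟩
    obtain _ | _ | k'' := k
    · exact (fwdK0 hcard hw).elim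
    · exact Or.inl (fwdPath hconn hw)
    · have hk2 : 2 ≤ k'' + 2 := by omega
      have hm1 : 1 ≤ m := by
        rcases Nat.eq_zero_or_pos m with h | h
        · subst h
          exact (fwdM0 (by omega) hw).elim
        · exact h
      have hm3 : m ≤ 3 := fwdMLe3 hconn hk2 hw hm1
      interval_cases m
      · exact Or.inr (Or.inl (fwdUniv hconn hw))
      · exact Or.inr (Or.inr (Or.inl ⟨k'' + 2, hk2, fwdB hconn hw⟩))
      · exact Or.inr (Or.inr (Or.inr ⟨k'' + 2, hk2, fwdC hconn hw⟩))
  · rintro (⟨n, ⟨e⟩⟩ | ⟨v, hv⟩ | ⟨k, hk, H, hH, ⟨e⟩⟩ | ⟨k, hk, H, hH, ⟨e⟩⟩)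
    · have hn : 2 ≤ n := by
        have := Fintype.card_congr e.toEquiv
        rw [Fintype.card_fin] at this
        omega
      exact ⟨1, n - 1, _, myCrsOfIso e (pathCRS hn)⟩
    · exact bwdUniv hv
    · obtain ⟨H1, H2, hB, rfl⟩ := hH
      exact ⟨k, 2, _, myCrsOfIso e (crsComp2 (myIsoConnected e hconn) hB)⟩
    · obtain ⟨H2, hC, rfl⟩ := hH
      exact ⟨k, 3, _, myCrsOfIso e (crsComp3 (myIsoConnected e hconn) hC)⟩
end

section
/- Let k ≥ 2 and let H2 be a graph on [2]^k that is K_[k]-minimal, where K_[k] is the complete graph on [k]. Then 1 ≤ |E(H2)| ≤ k; moreover |E(H2)| = 1 if and only if H2 = U_k, and |E(H2)| = k if and only if H2 = V_k. -/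
open SimpleGraph

section CompleteMinimalHelpers

variable {k : ℕ}

private lemma fin2_eq_zero {a : Fin 2} (h : a ≠ 1) : a = 0 := by
  revert a; decide

private lemma comp2_eq_parts {H1 H1' : SimpleGraph (Fin k)}
    {H2 H2' : SimpleGraph (Fin k → Fin 2)}
    (h : comp2 H1 H2 = comp2 H1' H2') : H1 = H1' ∧ H2 = H2' := by
  rw [SimpleGraph.ext_iff] at h
  constructor
  · ext i j
    exact iff_of_eq (congrFun (congrFun h (Sum.inl i)) (Sum.inl j))
  · ext x y
    exact iff_of_eq (congrFun (congrFun h (Sum.inr x)) (Sum.inr y))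

private lemma mem_Bset_iff (H1 : SimpleGraph (Fin k)) (H2 : SimpleGraph (Fin k → Fin 2)) :
    comp2 H1 H2 ∈ Bset k ↔ BCond H1 H2 := by
  constructor
  · rintro ⟨H1', H2', hc, he⟩
    obtain ⟨h1, h2⟩ := comp2_eq_parts he
    rwa [h1, h2]
  · intro hc
    exact ⟨H1, H2, hc, rfl⟩

private lemma bcond_top_iff (H2 : SimpleGraph (Fin k → Fin 2)) :
    BCond (⊤ : SimpleGraph (Fin k)) H2 ↔
      ∀ i, ∃ y, H2.Adj (fun _ => 1) y ∧ y i = 0 := by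
  constructor
  · intro hb i
    obtain ⟨y, hy, hyi⟩ := hb i (fun _ => 1) (fun j _ => rfl)
    exact ⟨y, hy, fin2_eq_zero hyi⟩
  · intro hp i x hx
    have hx1 : x = fun _ => 1 := by
      funext j
      apply hx
      by_cases hj : j = i
      · exact Or.inl hj
      · exact Or.inr (by simpa using Ne.symm hj)
    subst hx1
    obtain ⟨y, hy, hyi⟩ := hp i
    refine ⟨y, hy, ?_⟩
    show y i ≠ 1
    rw [hyi]
    decide

private lemma minimal_structure (H2 : SimpleGraph (Fin k → Fin 2))
    (h : H1Minimal (⊤ : SimpleGraph (Fin k)) H2) :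
    (∀ i, ∃ y, H2.Adj (fun _ => 1) y ∧ y i = 0) ∧
    (∀ a b, H2.Adj a b → a = (fun _ => 1) ∨ b = (fun _ => 1)) ∧
    (∀ y, H2.Adj (fun _ => 1) y →
      ∃ i, y i = 0 ∧ ∀ z, H2.Adj (fun _ => 1) z → z i = 0 → z = y) := by
  obtain ⟨hmem, hmin⟩ := h
  have hP := (bcond_top_iff H2).mp ((mem_Bset_iff _ _).mp hmem)
  have hnot : ∀ H2' : SimpleGraph (Fin k → Fin 2), H2' < H2 →
      ¬ ∀ i, ∃ y, H2'.Adj (fun _ => 1) y ∧ y i = 0 := by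
    intro H2' hlt hp
    exact hmin H2' hlt ((mem_Bset_iff _ _).mpr ((bcond_top_iff H2').mpr hp))
  refine ⟨hP, ?_, ?_⟩
  · intro a b hab
    by_contra hcon
    push_neg at hcon
    obtain ⟨ha, hb⟩ := hcon
    have hlt : H2.deleteEdges {s(a, b)} < H2 := by
      refine lt_of_le_of_ne (SimpleGraph.deleteEdges_le _) ?_
      intro he
      have h2 : (H2.deleteEdges {s(a, b)}).Adj a b := by rw [he]; exact hab
      rw [SimpleGraph.deleteEdges_adj] at h2
      exact h2.2 rfl
    apply hnot _ hlt
    intro i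
    obtain ⟨y, hy, hyi⟩ := hP i
    refine ⟨y, ?_, hyi⟩
    rw [SimpleGraph.deleteEdges_adj]
    refine ⟨hy, ?_⟩
    intro hmem'
    rw [Set.mem_singleton_iff, Sym2.eq_iff] at hmem'
    rcases hmem' with ⟨h1, _⟩ | ⟨h1, _⟩
    · exact ha h1.symm
    · exact hb h1.symm
  · intro y hy
    have hlt : H2.deleteEdges {s((fun _ => 1 : Fin k → Fin 2), y)} < H2 := by
      refine lt_of_le_of_ne (SimpleGraph.deleteEdges_le _) ?_
      intro he
      have h2 : (H2.deleteEdges {s((fun _ => 1 : Fin k → Fin 2), y)}).Adj (fun _ => 1) y := by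
        rw [he]; exact hy
      rw [SimpleGraph.deleteEdges_adj] at h2
      exact h2.2 rfl
    have hnp := hnot _ hlt
    push_neg at hnp
    obtain ⟨i, hi⟩ := hnp
    have key : ∀ z, H2.Adj (fun _ => 1) z → z i = 0 → z = y := by
      intro z hz hzi
      by_contra hzy
      refine hi z ?_ hzi
      rw [SimpleGraph.deleteEdges_adj]
      refine ⟨hz, ?_⟩
      intro hmem'
      rw [Set.mem_singleton_iff, Sym2.eq_iff] at hmem'
      rcases hmem' with ⟨_, h2⟩ | ⟨h1, _⟩
      · exact hzy h2
      · exact H2.loopless.irrefl _ (h1 ▸ hy)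
    obtain ⟨z, hz, hzi⟩ := hP i
    exact ⟨i, key z hz hzi ▸ hzi, key⟩

private lemma card_eq_ncard (G : SimpleGraph (Fin k → Fin 2)) [DecidableRel G.Adj] :
    G.edgeFinset.card = G.edgeSet.ncard := by
  rw [SimpleGraph.edgeFinset_card, ← Nat.card_eq_fintype_card, Nat.card_coe_set_eq]

end CompleteMinimalHelpers

/-- **Corollary.** If `H2` is `K_[k]`-minimal (`k ≥ 2`), then `1 ≤ |E(H2)| ≤ k`; moreover
`|E(H2)| = 1` iff `H2 = U_k`, and `|E(H2)| = k` iff `H2 = V_k`. -/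
theorem completeMinimal_size (k : ℕ) (hk : 2 ≤ k) (H2 : SimpleGraph (Fin k → Fin 2))
    [DecidableRel H2.Adj] (h : H1Minimal (⊤ : SimpleGraph (Fin k)) H2) :
    (1 ≤ H2.edgeFinset.card ∧ H2.edgeFinset.card ≤ k) ∧
    (H2.edgeFinset.card = 1 ↔ H2 = Uk k) ∧
    (H2.edgeFinset.card = k ↔ H2 = Vk k) := by
  classical
  have hk0 : 0 < k := by omega
  obtain ⟨hP, hQ, hR⟩ := minimal_structure H2 h
  set one : Fin k → Fin 2 := fun _ => 1 with hone
  set N : Set (Fin k → Fin 2) := {y | H2.Adj one y} with hN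
  -- the edge set of H2
  have hES : H2.edgeSet = (fun y => s(one, y)) '' N := by
    ext e
    refine Sym2.ind (fun a b => ?_) e
    simp only [SimpleGraph.mem_edgeSet, Set.mem_image]
    constructor
    · intro hab
      rcases hQ a b hab with ha | hb
      · subst ha; exact ⟨b, hab, rfl⟩
      · subst hb; exact ⟨a, hab.symm, Sym2.eq_swap⟩
    · rintro ⟨y, hy, he⟩
      rw [Sym2.eq_iff] at he
      rcases he with ⟨h1, h2⟩ | ⟨h1, h2⟩
      · rw [← h1, ← h2]; exact hy
      · rw [← h1, ← h2]; exact hy.symm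
  have hinj : Set.InjOn (fun y => s(one, y)) N := by
    intro y hy z hz he
    simp only [Sym2.eq_iff] at he
    rcases he with ⟨_, h2⟩ | ⟨h1, _⟩
    · exact h2
    · exact absurd (h1 ▸ hz) (H2.loopless.irrefl _)
  have hNfin : N.Finite := Set.toFinite N
  have hcard : H2.edgeFinset.card = N.ncard := by
    rw [card_eq_ncard, hES, Set.ncard_image_of_injOn hinj]
  -- private coordinates
  have hne : Nonempty (Fin k) := ⟨⟨0, hk0⟩⟩
  choose! f hf1 hf2 using hR
  have hfinj : Set.InjOn f N := by
    intro y hy z hz hfe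
    exact hf2 z hz y hy (hfe ▸ hf1 y hy)
  have huniv : (Set.univ : Set (Fin k)).ncard = k := by
    rw [Set.ncard_univ, Nat.card_eq_fintype_card, Fintype.card_fin]
  have hNle : N.ncard ≤ k := by
    calc N.ncard = (f '' N).ncard := (Set.ncard_image_of_injOn hfinj).symm
      _ ≤ (Set.univ : Set (Fin k)).ncard :=
          Set.ncard_le_ncard (Set.subset_univ _) Set.finite_univ
      _ = k := huniv
  have hNpos : 1 ≤ N.ncard := by
    obtain ⟨y, hy, _⟩ := hP ⟨0, hk0⟩
    have hnon : N.Nonempty := ⟨y, hy⟩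
    have := (Set.ncard_pos hNfin).mpr hnon
    omega
  -- edge sets of Uk and Vk
  have hUset : (Uk k).edgeSet = {s((fun _ => (0 : Fin 2)), (fun _ => (1 : Fin 2)))} := by
    rw [Uk, SimpleGraph.edgeSet_fromEdgeSet]
    ext e
    simp only [Set.mem_diff, Set.mem_singleton_iff, Set.mem_setOf_eq]
    constructor
    · exact fun he => he.1
    · intro he
      refine ⟨he, ?_⟩
      rw [he, Sym2.mem_diagSet, Sym2.isDiag_iff_proj_eq]
      intro hc
      have hc' : (0 : Fin 2) = 1 := congrFun hc ⟨0, hk0⟩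
      exact absurd hc' (by decide)
  have hupd_ne : ∀ i : Fin k,
      Function.update (fun _ => (1 : Fin 2)) i 0 ≠ (fun _ => (1 : Fin 2)) := by
    intro i hc
    have := congrFun hc i
    rw [Function.update_self] at this
    exact absurd this (by decide)
  have hVset : (Vk k).edgeSet =
      Set.range (fun i : Fin k =>
        s(Function.update (fun _ => (1 : Fin 2)) i 0, (fun _ => (1 : Fin 2)))) := by
    rw [Vk, SimpleGraph.edgeSet_fromEdgeSet]
    ext e
    simp only [Set.mem_diff, Set.mem_setOf_eq, Set.mem_range]
    constructor
    · rintro ⟨⟨i, he⟩, _⟩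
      exact ⟨i, he.symm⟩
    · rintro ⟨i, he⟩
      refine ⟨⟨i, he.symm⟩, ?_⟩
      rw [← he, Sym2.mem_diagSet, Sym2.isDiag_iff_proj_eq]
      exact hupd_ne i
  refine ⟨⟨by omega, by omega⟩, ?_, ?_⟩
  · -- card = 1 ↔ H2 = Uk
    constructor
    · intro h1
      rw [hcard] at h1
      obtain ⟨y₀, hy₀⟩ := Set.ncard_eq_one.mp h1
      have hy₀N : y₀ ∈ N := hy₀ ▸ Set.mem_singleton y₀
      have hy0 : y₀ = fun _ => (0 : Fin 2) := by
        funext i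
        obtain ⟨z, hz, hzi⟩ := hP i
        have hzN : z ∈ N := hz
        rw [hy₀, Set.mem_singleton_iff] at hzN
        rw [← hzN]
        exact hzi
      rw [← SimpleGraph.edgeSet_inj, hES, hUset, hy₀, Set.image_singleton, hy0]
      rw [Set.singleton_eq_singleton_iff]
      exact Sym2.eq_swap
    · intro heq
      rw [card_eq_ncard, heq, hUset, Set.ncard_singleton]
  · -- card = k ↔ H2 = Vk
    constructor
    · intro hkk
      rw [hcard] at hkk
      have himg : f '' N = Set.univ := by
        refine Set.eq_of_subset_of_ncard_le (Set.subset_univ _) ?_ Set.finite_univ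
        rw [Set.ncard_image_of_injOn hfinj, hkk, huniv]
      have hsurj : ∀ i : Fin k, ∃ y ∈ N, f y = i := by
        intro i
        have : i ∈ f '' N := himg ▸ Set.mem_univ i
        obtain ⟨y, hy, hfy⟩ := this
        exact ⟨y, hy, hfy⟩
      have hyupd : ∀ y ∈ N, y = Function.update one (f y) 0 := by
        intro y hy
        funext j
        by_cases hj : j = f y
        · subst hj
          rw [Function.update_self]
          exact hf1 y hy
        · rw [Function.update_of_ne hj]
          by_contra hyj
          have hyj0 : y j = 0 := fin2_eq_zero hyj
          obtain ⟨z, hz, hfz⟩ := hsurj j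
          have hyz : y = z := hf2 z hz y hy (by rw [hfz]; exact hyj0)
          exact hj (by rw [hyz, hfz])
      have hNrange : N = Set.range (fun i : Fin k => Function.update one i 0) := by
        ext y
        constructor
        · intro hy
          exact ⟨f y, (hyupd y hy).symm⟩
        · rintro ⟨i, hi⟩
          obtain ⟨z, hz, hfz⟩ := hsurj i
          have : z = y := by
            rw [← hi, ← hfz]
            exact hyupd z hz
          exact this ▸ hz
      rw [← SimpleGraph.edgeSet_inj, hES, hVset, hNrange, ← Set.range_comp]
      have hfun : ((fun y => s(one, y)) ∘ fun i : Fin k => Function.update one i 0)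
          = (fun i : Fin k =>
              s(Function.update (fun _ => (1 : Fin 2)) i 0, (fun _ => (1 : Fin 2)))) := by
        funext i
        exact Sym2.eq_swap
      rw [hfun]
    · intro heq
      rw [card_eq_ncard, heq, hVset]
      have hginj : Function.Injective (fun i : Fin k =>
          s(Function.update (fun _ => (1 : Fin 2)) i 0, (fun _ => (1 : Fin 2)))) := by
        intro i j hij
        simp only [Sym2.eq_iff] at hij
        rcases hij with ⟨h1, _⟩ | ⟨h1, _⟩
        · by_contra hij'
          have := congrFun h1 i
          rw [Function.update_self, Function.update_of_ne hij'] at this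
          exact absurd this (by decide)
        · exact absurd h1 (hupd_ne i)
      rw [← Set.image_univ, Set.ncard_image_of_injOn (hginj.injOn), huniv]
end
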